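/- Let L be a Lie algebra over a field F with a free presentation 0 → R → F → L → 0, and let h: L × L → L⊗L be a universal Lie pairing. Then L∧L ≅ F²/[R,F] as Lie algebras. -/

import Mathlib

set_option maxHeartbeats 2000000


universe u v w x

/-- A Lie pairing `ρ : L × L → H` of Lie algebras over a field `F`:
a bilinear map satisfying the three Lie-pairing relations. -/
structure IsLiePairing (F : Type u) [Field F] {L : Type v} {H : Type w}
    [LieRing L] [LieAlgebra F L] [LieRing H] [LieAlgebra F H]
    (ρ : L → L → H) : Prop where
  add_left : ∀ l l' k : L, ρ (l + l') k = ρ l k + ρ l' k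
  add_right : ∀ l k k' : L, ρ l (k + k') = ρ l k + ρ l k'
  smul_left : ∀ (c : F) (l k : L), ρ (c • l) k = c • ρ l k
  smul_right : ∀ (c : F) (l k : L), ρ l (c • k) = c • ρ l k
  bracket_left : ∀ l l' s : L, ρ ⁅l, l'⁆ s = ρ l ⁅l', s⁆ - ρ l' ⁅l, s⁆
  bracket_right : ∀ l s s' : L, ρ l ⁅s, s'⁆ = ρ ⁅s', l⁆ s - ρ ⁅s, l⁆ s'
  bracket_bracket : ∀ l s l' s' : L, ρ ⁅l, s⁆ ⁅l', s'⁆ = -⁅ρ s l, ρ l' s'⁆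

/-- `h : L × L → T` is a universal Lie pairing: `T` plays the role of the
nonabelian tensor square `L ⊗ L`, with `h l l' = l ⊗ l'`. -/
structure IsUniversalLiePairing (F : Type u) [Field F] (L : Type v) (T : Type w)
    [LieRing L] [LieAlgebra F L] [LieRing T] [LieAlgebra F T]
    (h : L → L → T) : Prop where
  isLiePairing : IsLiePairing F h
  universal : ∀ (Q : Type (max u v w)) [LieRing Q] [LieAlgebra F Q]
      (h' : L → L → Q), IsLiePairing F h' →
        ∃! ζ : T →ₗ⁅F⁆ Q, ∀ x y : L, ζ (h x y) = h' x y

section Helpers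

theorem lie_comm_neg {A : Type*} [LieRing A] (a b : A) : ⁅a, b⁆ = -⁅b, a⁆ := by
  rw [← lie_skew]

theorem jacID {A : Type*} [LieRing A] (a b c : A) :
    ⁅a, ⁅b, c⁆⁆ = ⁅⁅c, a⁆, b⁆ - ⁅⁅b, a⁆, c⁆ := by
  rw [lie_lie c a b, lie_lie b a c]
  have h1 : ⁅a, ⁅c, b⁆⁆ = -⁅a, ⁅b, c⁆⁆ := by rw [lie_comm_neg c b, lie_neg]
  have h2 : ⁅c, ⁅a, b⁆⁆ = -⁅⁅a, b⁆, c⁆ := by rw [lie_comm_neg]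
  have h3 : ⁅a, ⁅b, c⁆⁆ = ⁅⁅a, b⁆, c⁆ + ⁅b, ⁅a, c⁆⁆ := leibniz_lie a b c
  rw [h1, h2, h3]
  abel

section Transfer
variable {K : Type*} [CommRing K] {A : Type*} {B : Type*} [LieRing A] [LieAlgebra K A]
  [AddCommGroup B] [Module K B]

/-- Transfer a Lie ring structure along a linear equivalence. -/
noncomputable def tLieRing (e : B ≃ₗ[K] A) : LieRing B where
  __ := (inferInstance : AddCommGroup B)
  bracket x y := e.symm ⁅e x, e y⁆
  add_lie x y z := by simp [map_add, add_lie]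
  lie_add x y z := by simp [map_add, lie_add]
  lie_self x := by simp
  leibniz_lie x y z := by simp [← map_add]

/-- Transfer a Lie algebra structure along a linear equivalence. -/
noncomputable def tLieAlgebra (e : B ≃ₗ[K] A) :
    @LieAlgebra K B _ (tLieRing e) :=
  letI := tLieRing e
  { (inferInstance : Module K B) with
    lie_smul := fun c x y => by
      show e.symm ⁅e x, e (c • y)⁆ = c • e.symm ⁅e x, e y⁆
      simp [map_smul, lie_smul] }

/-- The transferred structure is isomorphic as a Lie algebra. -/
noncomputable def tLieEquiv (e : B ≃ₗ[K] A) :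
    @LieEquiv K B A _ (tLieRing e) (tLieAlgebra e) _ _ := by
  letI := tLieRing e
  letI := tLieAlgebra e
  exact
  { toLinearMap := e.toLinearMap
    map_lie' := by
      intro x y
      show e (e.symm ⁅e x, e y⁆) = ⁅e x, e y⁆
      simp
    invFun := e.symm
    left_inv := e.left_inv
    right_inv := e.right_inv }

end Transfer

namespace IsLiePairing

variable {F : Type u} [Field F] {L : Type v} {H : Type w} {H' : Type x}
    [LieRing L] [LieAlgebra F L] [LieRing H] [LieAlgebra F H] [LieRing H'] [LieAlgebra F H']
    {ρ : L → L → H}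

theorem zero_left (hp : IsLiePairing F ρ) (k : L) : ρ 0 k = 0 := by
  have h1 := hp.add_left 0 0 k
  rw [add_zero] at h1
  exact left_eq_add.mp h1

theorem zero_right (hp : IsLiePairing F ρ) (k : L) : ρ k 0 = 0 := by
  have h1 := hp.add_right k 0 0
  rw [add_zero] at h1
  exact left_eq_add.mp h1

theorem comp (hp : IsLiePairing F ρ) (g : H →ₗ⁅F⁆ H') :
    IsLiePairing F (fun a b => g (ρ a b)) where
  add_left l l' k := by rw [hp.add_left, map_add g]
  add_right l k k' := by rw [hp.add_right, map_add g]
  smul_left c l k := by rw [hp.smul_left, map_smul g]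
  smul_right c l k := by rw [hp.smul_right, map_smul g]
  bracket_left l l' s := by rw [hp.bracket_left, map_sub g]
  bracket_right l s s' := by rw [hp.bracket_right, map_sub g]
  bracket_bracket l s l' s' := by rw [hp.bracket_bracket, map_neg g, g.map_lie]

end IsLiePairing

end Helpers

theorem exteriorSquare_iso_freePresentation (K : Type u) [Field K]
    (L : Type v) [LieRing L] [LieAlgebra K L]
    (T : Type w) [LieRing T] [LieAlgebra K T]
    (h : L → L → T) (hh : IsUniversalLiePairing K L T h)
    (sq : LieIdeal K T)
    (hsq : (sq : Submodule K T) = Submodule.span K {z : T | ∃ l : L, z = h l l})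
    (X : Type x) (φ : FreeLieAlgebra K X →ₗ⁅K⁆ L) (hφ : Function.Surjective φ)
    (J : LieIdeal K
      (⁅(⊤ : LieIdeal K (FreeLieAlgebra K X)),
        (⊤ : LieIdeal K (FreeLieAlgebra K X))⁆ :
          LieIdeal K (FreeLieAlgebra K X)))
    (hJ : ∀ x : (⁅(⊤ : LieIdeal K (FreeLieAlgebra K X)),
        (⊤ : LieIdeal K (FreeLieAlgebra K X))⁆ : LieIdeal K (FreeLieAlgebra K X)),
      x ∈ J ↔ (x : FreeLieAlgebra K X) ∈
        ⁅φ.ker, (⊤ : LieIdeal K (FreeLieAlgebra K X))⁆) :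
    Nonempty ((T ⧸ sq) ≃ₗ⁅K⁆
      ((⁅(⊤ : LieIdeal K (FreeLieAlgebra K X)),
        (⊤ : LieIdeal K (FreeLieAlgebra K X))⁆ :
          LieIdeal K (FreeLieAlgebra K X)) ⧸ J)) := by
  classical
  let D : LieIdeal K (FreeLieAlgebra K X) :=
    ⁅(⊤ : LieIdeal K (FreeLieAlgebra K X)), (⊤ : LieIdeal K (FreeLieAlgebra K X))⁆
  -- the set of brackets spanning D
  have spanD : LieSubmodule.toSubmodule D =
      Submodule.span K {z : FreeLieAlgebra K X | ∃ a b : FreeLieAlgebra K X, ⁅a, b⁆ = z} := by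
    rw [LieSubmodule.lieIdeal_oper_eq_linear_span']
    congr 1
    ext z
    constructor
    · rintro ⟨a, -, b, -, rfl⟩; exact ⟨a, b, rfl⟩
    · rintro ⟨a, b, rfl⟩; exact ⟨a, LieSubmodule.mem_top a, b, LieSubmodule.mem_top b, rfl⟩
  -- the quotient `M = T ⧸ sq` (the exterior square) and the induced pairing
  let mkT : T →ₗ⁅K⁆ T ⧸ sq :=
    { toLinearMap := (LieSubmodule.toSubmodule sq).mkQ, map_lie' := fun {x y} => rfl }
  let hb : L → L → T ⧸ sq := fun a b => mkT (h a b)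
  have hbP : IsLiePairing K hb := hh.isLiePairing.comp mkT
  have hb_self : ∀ a : L, hb a a = 0 := by
    intro a
    have hmem : h a a ∈ LieSubmodule.toSubmodule sq := by
      have hsq' : LieSubmodule.toSubmodule sq
          = Submodule.span K {z : T | ∃ l : L, z = h l l} := hsq
      rw [hsq']
      exact Submodule.subset_span ⟨a, rfl⟩
    exact (Submodule.Quotient.mk_eq_zero _).2 hmem
  have hb_skew : ∀ a b : L, hb b a = - hb a b := by
    intro a b
    have e0 := hb_self (a + b)
    rw [hbP.add_left, hbP.add_right, hbP.add_right, hb_self a, hb_self b] at e0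
    have e1 : hb a b + hb b a = 0 := by
      rw [zero_add, add_zero] at e0
      exact e0
    exact eq_neg_of_add_eq_zero_right e1
  have key1 : ∀ a b c d : L, ⁅hb a b, hb c d⁆ = hb ⁅a, b⁆ ⁅c, d⁆ := by
    intro a b c d
    have e1 := hbP.bracket_bracket a b c d
    rw [e1, hb_skew a b]
    simp
  -- the auxiliary Lie algebra structure on `L × (T ⧸ sq)`
  letI instEB : Bracket (L × (T ⧸ sq)) (L × (T ⧸ sq)) :=
    ⟨fun p q => (⁅p.1, q.1⁆, hb p.1 q.1)⟩
  letI instE : LieRing (L × (T ⧸ sq)) :=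
    { (inferInstance : AddCommGroup (L × (T ⧸ sq))), instEB with
      add_lie := fun p q r => by
        refine Prod.ext ?_ ?_
        · show ⁅p.1 + q.1, r.1⁆ = ⁅p.1, r.1⁆ + ⁅q.1, r.1⁆
          exact add_lie _ _ _
        · show hb (p.1 + q.1) r.1 = hb p.1 r.1 + hb q.1 r.1
          exact hbP.add_left _ _ _
      lie_add := fun p q r => by
        refine Prod.ext ?_ ?_
        · show ⁅p.1, q.1 + r.1⁆ = ⁅p.1, q.1⁆ + ⁅p.1, r.1⁆
          exact lie_add _ _ _
        · show hb p.1 (q.1 + r.1) = hb p.1 q.1 + hb p.1 r.1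
          exact hbP.add_right _ _ _
      lie_self := fun p => by
        refine Prod.ext ?_ ?_
        · show ⁅p.1, p.1⁆ = (0 : L)
          exact lie_self _
        · show hb p.1 p.1 = 0
          exact hb_self _
      leibniz_lie := fun p q r => by
        refine Prod.ext ?_ ?_
        · show ⁅p.1, ⁅q.1, r.1⁆⁆ = ⁅⁅p.1, q.1⁆, r.1⁆ + ⁅q.1, ⁅p.1, r.1⁆⁆
          exact leibniz_lie _ _ _
        · show hb p.1 ⁅q.1, r.1⁆ = hb ⁅p.1, q.1⁆ r.1 + hb q.1 ⁅p.1, r.1⁆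
          rw [hbP.bracket_left p.1 q.1 r.1]
          abel }
  letI instEA : LieAlgebra K (L × (T ⧸ sq)) :=
    { (inferInstance : Module K (L × (T ⧸ sq))) with
      lie_smul := fun c p q => by
        refine Prod.ext ?_ ?_
        · show ⁅p.1, c • q.1⁆ = c • ⁅p.1, q.1⁆
          exact lie_smul _ _ _
        · show hb p.1 (c • q.1) = c • hb p.1 q.1
          exact hbP.smul_right _ _ _ }
  -- the lift `Ψ : FreeLieAlgebra K X → L × (T ⧸ sq)`
  let Ψ : FreeLieAlgebra K X →ₗ⁅K⁆ (L × (T ⧸ sq)) :=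
    FreeLieAlgebra.lift K (fun a => (φ (FreeLieAlgebra.of K a), (0 : T ⧸ sq)))
  let p1 : (L × (T ⧸ sq)) →ₗ⁅K⁆ L :=
    { toLinearMap := LinearMap.fst K L (T ⧸ sq), map_lie' := fun {x y} => rfl }
  have hcomp : p1.comp Ψ = φ := by
    apply FreeLieAlgebra.hom_ext
    intro a
    rw [LieHom.comp_apply]
    show p1 (Ψ (FreeLieAlgebra.of K a)) = _
    rw [show Ψ (FreeLieAlgebra.of K a) = (φ (FreeLieAlgebra.of K a), (0 : T ⧸ sq)) from
      FreeLieAlgebra.lift_of_apply _ _]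
    rfl
  have hΨ1 : ∀ f : FreeLieAlgebra K X, (Ψ f).1 = φ f := fun f => LieHom.congr_fun hcomp f
  let βlin : FreeLieAlgebra K X →ₗ[K] (T ⧸ sq) :=
    (LinearMap.snd K L (T ⧸ sq)).comp Ψ.toLinearMap
  have β_br : ∀ f g : FreeLieAlgebra K X, βlin ⁅f, g⁆ = hb (φ f) (φ g) := by
    intro f g
    show (Ψ ⁅f, g⁆).2 = hb (φ f) (φ g)
    rw [Ψ.map_lie]
    show hb (Ψ f).1 (Ψ g).1 = hb (φ f) (φ g)
    rw [hΨ1 f, hΨ1 g]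
  -- `βlin` is a Lie algebra morphism on the derived subalgebra `D`
  have claim2 : ∀ a b : FreeLieAlgebra K X,
      a ∈ Submodule.span K {z : FreeLieAlgebra K X | ∃ a b : FreeLieAlgebra K X, ⁅a, b⁆ = z} →
      b ∈ Submodule.span K {z : FreeLieAlgebra K X | ∃ a b : FreeLieAlgebra K X, ⁅a, b⁆ = z} →
      βlin ⁅a, b⁆ = ⁅βlin a, βlin b⁆ := by
    intro a b ha hb'
    refine Submodule.span_induction₂
      (p := fun a b _ _ => βlin ⁅a, b⁆ = ⁅βlin a, βlin b⁆) ?_ ?_ ?_ ?_ ?_ ?_ ?_ ha hb'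
    · rintro z w ⟨za, zb, rfl⟩ ⟨wa, wb, rfl⟩
      rw [β_br, β_br, β_br, φ.map_lie, φ.map_lie, ← key1]
    · intro y _hy
      simp
    · intro z _hz
      simp
    · intro z w y _ _ _ h1 h2
      simp only [add_lie, map_add, h1, h2]
    · intro z w y _ _ _ h1 h2
      simp only [lie_add, map_add, h1, h2]
    · intro c z w _ _ h1
      simp only [smul_lie, map_smul, h1]
    · intro c z w _ _ h1
      simp only [lie_smul, map_smul, h1]
  let βD : (↥D) →ₗ⁅K⁆ (T ⧸ sq) :=
    { toLinearMap := βlin.comp (LieSubmodule.toSubmodule D).subtype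
      map_lie' := by
        intro z w
        have hz : (z : FreeLieAlgebra K X) ∈
            Submodule.span K {y : FreeLieAlgebra K X | ∃ a b : FreeLieAlgebra K X, ⁅a, b⁆ = y} := by
          rw [← spanD]; exact z.2
        have hw : (w : FreeLieAlgebra K X) ∈
            Submodule.span K {y : FreeLieAlgebra K X | ∃ a b : FreeLieAlgebra K X, ⁅a, b⁆ = y} := by
          rw [← spanD]; exact w.2
        exact claim2 _ _ hz hw }
  -- `βD` kills `J`
  have hkerJ : ∀ z : ↥D, z ∈ J → βD z = 0 := by
    intro z hzJ
    have hz' : (z : FreeLieAlgebra K X) ∈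
        LieSubmodule.toSubmodule (⁅φ.ker, (⊤ : LieIdeal K (FreeLieAlgebra K X))⁆ :
          LieIdeal K (FreeLieAlgebra K X)) := (hJ z).1 hzJ
    rw [LieSubmodule.lieIdeal_oper_eq_linear_span'] at hz'
    show βlin (z : FreeLieAlgebra K X) = 0
    refine Submodule.span_induction (p := fun m _ => βlin m = 0) ?_ ?_ ?_ ?_ hz'
    · rintro m ⟨r, hr, n, -, rfl⟩
      rw [β_br, LieHom.mem_ker.mp hr, hbP.zero_left]
    · exact map_zero _
    · intro m n _ _ h1 h2
      simp only [map_add, h1, h2, add_zero]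
    · intro c m _ h1
      simp only [map_smul, h1, smul_zero]
  -- descend to the quotient by `J`
  let βbar0 : ((↥D) ⧸ LieSubmodule.toSubmodule J) →ₗ[K] (T ⧸ sq) :=
    Submodule.liftQ (LieSubmodule.toSubmodule J) βD.toLinearMap
      (fun z hz => LinearMap.mem_ker.2 (hkerJ z hz))
  let βbar : (D ⧸ J) →ₗ⁅K⁆ (T ⧸ sq) :=
    { toLinearMap := βbar0
      map_lie' := by
        intro q r
        obtain ⟨z, rfl⟩ := Submodule.Quotient.mk_surjective _ q
        obtain ⟨w, rfl⟩ := Submodule.Quotient.mk_surjective _ r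
        rw [← LieSubmodule.Quotient.mk_bracket]
        show βbar0 (Submodule.Quotient.mk ⁅z, w⁆) =
          ⁅βbar0 (Submodule.Quotient.mk z), βbar0 (Submodule.Quotient.mk w)⁆
        rw [Submodule.liftQ_apply, Submodule.liftQ_apply, Submodule.liftQ_apply]
        show βD ⁅z, w⁆ = ⁅βD z, βD w⁆
        exact βD.map_lie z w }
  have βbar_mk : ∀ z : ↥D, βbar (Submodule.Quotient.mk z) = βlin (z : FreeLieAlgebra K X) :=
    fun z => Submodule.liftQ_apply _ _ _
  -- a linear section of `φ`
  have hrange : LinearMap.range φ.toLinearMap = ⊤ := LinearMap.range_eq_top.2 hφ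
  obtain ⟨sl, hsl⟩ := φ.toLinearMap.exists_rightInverse_of_surjective hrange
  have hs : ∀ l : L, φ (sl l) = l := fun l => LinearMap.congr_fun hsl l
  -- the pairing `L × L → D ⧸ J`
  have memD : ∀ f g : FreeLieAlgebra K X, ⁅f, g⁆ ∈ D := fun f g =>
    LieSubmodule.lie_mem_lie (LieSubmodule.mem_top f) (LieSubmodule.mem_top g)
  let mkJ : (↥D) →ₗ[K] (D ⧸ J) := (LieSubmodule.toSubmodule J).mkQ
  let ep : FreeLieAlgebra K X → FreeLieAlgebra K X → (D ⧸ J) := fun f g =>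
    mkJ ⟨⁅f, g⁆, memD f g⟩
  have mkJ_zero : ∀ (z : ↥D), (z : FreeLieAlgebra K X) ∈
      (⁅φ.ker, (⊤ : LieIdeal K (FreeLieAlgebra K X))⁆ : LieIdeal K (FreeLieAlgebra K X)) →
      mkJ z = 0 := fun z hz => (Submodule.Quotient.mk_eq_zero _).2 ((hJ z).2 hz)
  have ep_add_left : ∀ f1 f2 g : FreeLieAlgebra K X, ep (f1 + f2) g = ep f1 g + ep f2 g := by
    intro f1 f2 g
    have e : (⟨⁅f1 + f2, g⁆, memD _ _⟩ : ↥D) = ⟨⁅f1, g⁆, memD _ _⟩ + ⟨⁅f2, g⁆, memD _ _⟩ :=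
      Subtype.ext (add_lie f1 f2 g)
    show mkJ _ = mkJ _ + mkJ _
    rw [← map_add, ← e]
  have ep_add_right : ∀ f g1 g2 : FreeLieAlgebra K X, ep f (g1 + g2) = ep f g1 + ep f g2 := by
    intro f g1 g2
    have e : (⟨⁅f, g1 + g2⁆, memD _ _⟩ : ↥D) = ⟨⁅f, g1⁆, memD _ _⟩ + ⟨⁅f, g2⁆, memD _ _⟩ :=
      Subtype.ext (lie_add f g1 g2)
    show mkJ _ = mkJ _ + mkJ _
    rw [← map_add, ← e]
  have ep_smul_left : ∀ (c : K) (f g : FreeLieAlgebra K X), ep (c • f) g = c • ep f g := by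
    intro c f g
    have e : (⟨⁅c • f, g⁆, memD _ _⟩ : ↥D) = c • ⟨⁅f, g⁆, memD _ _⟩ :=
      Subtype.ext (smul_lie c f g)
    show mkJ _ = c • mkJ _
    rw [← map_smul, ← e]
  have ep_smul_right : ∀ (c : K) (f g : FreeLieAlgebra K X), ep f (c • g) = c • ep f g := by
    intro c f g
    have e : (⟨⁅f, c • g⁆, memD _ _⟩ : ↥D) = c • ⟨⁅f, g⁆, memD _ _⟩ :=
      Subtype.ext (lie_smul c f g)
    show mkJ _ = c • mkJ _
    rw [← map_smul, ← e]
  have ep_skew : ∀ f g : FreeLieAlgebra K X, ep g f = - ep f g := by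
    intro f g
    have e : (⟨⁅g, f⁆, memD _ _⟩ : ↥D) = -⟨⁅f, g⁆, memD _ _⟩ :=
      Subtype.ext (lie_comm_neg g f)
    show mkJ _ = - mkJ _
    rw [← map_neg, ← e]
  have ep_congr_left : ∀ f1 f2 g : FreeLieAlgebra K X, φ f1 = φ f2 → ep f1 g = ep f2 g := by
    intro f1 f2 g hf
    have e : (⟨⁅f1, g⁆, memD _ _⟩ : ↥D) - ⟨⁅f2, g⁆, memD _ _⟩ = ⟨⁅f1 - f2, g⁆, memD _ _⟩ :=
      Subtype.ext (sub_lie f1 f2 g).symm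
    have hzero : ep f1 g - ep f2 g = 0 := by
      show mkJ _ - mkJ _ = 0
      rw [← map_sub, e]
      refine mkJ_zero _ ?_
      refine LieSubmodule.lie_mem_lie ?_ (LieSubmodule.mem_top g)
      exact LieHom.mem_ker.2 (by rw [map_sub φ, hf, sub_self])
    exact sub_eq_zero.mp hzero
  have ep_congr_right : ∀ f g1 g2 : FreeLieAlgebra K X, φ g1 = φ g2 → ep f g1 = ep f g2 := by
    intro f g1 g2 hg
    rw [ep_skew g1 f, ep_skew g2 f, ep_congr_left g1 g2 f hg]
  -- pure bracket identities for `ep`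
  have id1 : ∀ a b c : FreeLieAlgebra K X, ep ⁅a, b⁆ c = ep a ⁅b, c⁆ - ep b ⁅a, c⁆ := by
    intro a b c
    have e : (⟨⁅a, ⁅b, c⁆⁆, memD _ _⟩ : ↥D) - ⟨⁅b, ⁅a, c⁆⁆, memD _ _⟩ =
        ⟨⁅⁅a, b⁆, c⁆, memD _ _⟩ := Subtype.ext (by
      show ⁅a, ⁅b, c⁆⁆ - ⁅b, ⁅a, c⁆⁆ = ⁅⁅a, b⁆, c⁆
      rw [lie_lie])
    show mkJ _ = mkJ _ - mkJ _
    rw [← map_sub, e]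
  have id2 : ∀ a b c : FreeLieAlgebra K X, ep a ⁅b, c⁆ = ep ⁅c, a⁆ b - ep ⁅b, a⁆ c := by
    intro a b c
    have e : (⟨⁅⁅c, a⁆, b⁆, memD _ _⟩ : ↥D) - ⟨⁅⁅b, a⁆, c⁆, memD _ _⟩ =
        ⟨⁅a, ⁅b, c⁆⁆, memD _ _⟩ := Subtype.ext (by
      show ⁅⁅c, a⁆, b⁆ - ⁅⁅b, a⁆, c⁆ = ⁅a, ⁅b, c⁆⁆
      rw [← jacID])
    show mkJ _ = mkJ _ - mkJ _
    rw [← map_sub, e]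
  have id3 : ∀ a b c d : FreeLieAlgebra K X, ep ⁅a, b⁆ ⁅c, d⁆ = -⁅ep b a, ep c d⁆ := by
    intro a b c d
    have hbr : (⁅(⟨⁅b, a⁆, memD b a⟩ : ↥D), (⟨⁅c, d⁆, memD c d⟩ : ↥D)⁆ : ↥D) =
        -⟨⁅⁅a, b⁆, ⁅c, d⁆⁆, memD _ _⟩ := Subtype.ext (by
      show ⁅⁅b, a⁆, ⁅c, d⁆⁆ = -⁅⁅a, b⁆, ⁅c, d⁆⁆
      rw [lie_comm_neg b a, neg_lie])
    have e2 : ep ⁅a, b⁆ ⁅c, d⁆ = - mkJ ⁅(⟨⁅b, a⁆, memD b a⟩ : ↥D), (⟨⁅c, d⁆, memD c d⟩ : ↥D)⁆ := by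
      show mkJ _ = _
      rw [hbr, map_neg, neg_neg]
    rw [e2]
    congr 1
  -- the pairing into `D ⧸ J`
  let hq : L → L → (D ⧸ J) := fun a b => ep (sl a) (sl b)
  have hqP : IsLiePairing K hq := by
    refine ⟨?_, ?_, ?_, ?_, ?_, ?_, ?_⟩
    · intro l l' k
      show ep (sl (l + l')) (sl k) = ep (sl l) (sl k) + ep (sl l') (sl k)
      rw [map_add, ep_add_left]
    · intro l k k'
      show ep (sl l) (sl (k + k')) = ep (sl l) (sl k) + ep (sl l) (sl k')
      rw [map_add, ep_add_right]
    · intro c l k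
      show ep (sl (c • l)) (sl k) = c • ep (sl l) (sl k)
      rw [map_smul, ep_smul_left]
    · intro c l k
      show ep (sl l) (sl (c • k)) = c • ep (sl l) (sl k)
      rw [map_smul, ep_smul_right]
    · intro l l' k
      show ep (sl ⁅l, l'⁆) (sl k) = ep (sl l) (sl ⁅l', k⁆) - ep (sl l') (sl ⁅l, k⁆)
      rw [ep_congr_left (sl ⁅l, l'⁆) ⁅sl l, sl l'⁆ (sl k)
        (by rw [φ.map_lie, hs, hs, hs]),
        ep_congr_right (sl l) (sl ⁅l', k⁆) ⁅sl l', sl k⁆ (by rw [φ.map_lie, hs, hs, hs]),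
        ep_congr_right (sl l') (sl ⁅l, k⁆) ⁅sl l, sl k⁆ (by rw [φ.map_lie, hs, hs, hs])]
      exact id1 (sl l) (sl l') (sl k)
    · intro l k k'
      show ep (sl l) (sl ⁅k, k'⁆) = ep (sl ⁅k', l⁆) (sl k) - ep (sl ⁅k, l⁆) (sl k')
      rw [ep_congr_right (sl l) (sl ⁅k, k'⁆) ⁅sl k, sl k'⁆ (by rw [φ.map_lie, hs, hs, hs]),
        ep_congr_left (sl ⁅k', l⁆) ⁅sl k', sl l⁆ (sl k) (by rw [φ.map_lie, hs, hs, hs]),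
        ep_congr_left (sl ⁅k, l⁆) ⁅sl k, sl l⁆ (sl k') (by rw [φ.map_lie, hs, hs, hs])]
      exact id2 (sl l) (sl k) (sl k')
    · intro l k l' k'
      show ep (sl ⁅l, k⁆) (sl ⁅l', k'⁆) = -⁅ep (sl k) (sl l), ep (sl l') (sl k')⁆
      rw [ep_congr_left (sl ⁅l, k⁆) ⁅sl l, sl k⁆ (sl ⁅l', k'⁆) (by rw [φ.map_lie, hs, hs, hs]),
        ep_congr_right ⁅sl l, sl k⁆ (sl ⁅l', k'⁆) ⁅sl l', sl k'⁆ (by rw [φ.map_lie, hs, hs, hs])]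
      exact id3 (sl l) (sl k) (sl l') (sl k')
  have hq_phi : ∀ f g : FreeLieAlgebra K X, ep f g = hq (φ f) (φ g) := by
    intro f g
    show ep f g = ep (sl (φ f)) (sl (φ g))
    rw [ep_congr_left f (sl (φ f)) g (by rw [hs]),
      ep_congr_right (sl (φ f)) g (sl (φ g)) (by rw [hs])]
  -- `D ⧸ J` is spanned by the image of `hq`
  have hspanQ : ∀ q : D ⧸ J, q ∈ Submodule.span K (Set.range (Function.uncurry hq)) := by
    intro q
    obtain ⟨z, rfl⟩ := Submodule.Quotient.mk_surjective _ q
    obtain ⟨a, ha⟩ := z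
    have ha' : a ∈ Submodule.span K
        {z : FreeLieAlgebra K X | ∃ a b : FreeLieAlgebra K X, ⁅a, b⁆ = z} := by
      rw [← spanD]; exact ha
    refine Submodule.span_induction (p := fun a' _ => ∀ hm : a' ∈ D,
      (Submodule.Quotient.mk (⟨a', hm⟩ : ↥D) : D ⧸ J) ∈
        Submodule.span K (Set.range (Function.uncurry hq))) ?_ ?_ ?_ ?_ ha' ha
    · rintro z ⟨f, g, rfl⟩ hm
      have : (Submodule.Quotient.mk (⟨⁅f, g⁆, hm⟩ : ↥D) : D ⧸ J) = hq (φ f) (φ g) := by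
        rw [← hq_phi]
        rfl
      rw [this]
      exact Submodule.subset_span ⟨(φ f, φ g), rfl⟩
    · intro hm
      have e : (⟨(0 : FreeLieAlgebra K X), hm⟩ : ↥D) = 0 := Subtype.ext rfl
      rw [e, Submodule.Quotient.mk_zero]
      exact Submodule.zero_mem _
    · intro z w hzs hws ihz ihw hm
      have hzD : z ∈ D := by rw [← LieSubmodule.mem_toSubmodule, spanD]; exact hzs
      have hwD : w ∈ D := by rw [← LieSubmodule.mem_toSubmodule, spanD]; exact hws
      have e : (⟨z + w, hm⟩ : ↥D) = ⟨z, hzD⟩ + ⟨w, hwD⟩ := Subtype.ext rfl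
      rw [e, Submodule.Quotient.mk_add]
      exact Submodule.add_mem _ (ihz hzD) (ihw hwD)
    · intro c z hzs ihz hm
      have hzD : z ∈ D := by rw [← LieSubmodule.mem_toSubmodule, spanD]; exact hzs
      have e : (⟨c • z, hm⟩ : ↥D) = c • ⟨z, hzD⟩ := Subtype.ext rfl
      rw [e, Submodule.Quotient.mk_smul]
      exact Submodule.smul_mem _ _ (ihz hzD)
  -- `D ⧸ J` is a small type
  have hsurj : Function.Surjective ⇑(Finsupp.linearCombination K (Function.uncurry hq)) := by
    rw [← LinearMap.range_eq_top, Finsupp.range_linearCombination]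
    exact eq_top_iff.2 fun q _ => hspanQ q
  haveI hsmall0 : Small.{max u v w} ((L × L) →₀ K) := small_max.{max u v w} _
  haveI hsmall : Small.{max u v w} (D ⧸ J) := small_of_surjective hsurj
  -- transfer the Lie algebra structure to the small model
  let e : Shrink.{max u v w} (D ⧸ J) ≃ₗ[K] (D ⧸ J) := Shrink.linearEquiv _ _
  letI : LieRing (Shrink.{max u v w} (D ⧸ J)) := tLieRing e
  letI : LieAlgebra K (Shrink.{max u v w} (D ⧸ J)) := tLieAlgebra e
  let eQ := tLieEquiv e
  obtain ⟨ζ0, hζ0, -⟩ := hh.universal (Shrink.{max u v w} (D ⧸ J))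
    (fun a b => eQ.symm.toLieHom (hq a b)) (hqP.comp eQ.symm.toLieHom)
  let ζ : T →ₗ⁅K⁆ (D ⧸ J) := eQ.toLieHom.comp ζ0
  have hζ : ∀ a b : L, ζ (h a b) = hq a b := by
    intro a b
    show eQ.toLieHom (ζ0 (h a b)) = hq a b
    rw [hζ0]
    exact eQ.apply_symm_apply (hq a b)
  -- `ζ` kills `sq`, so it descends to `T ⧸ sq`
  have hζsq : ∀ t : T, t ∈ LieSubmodule.toSubmodule sq → ζ t = 0 := by
    intro t ht
    have hsq' : LieSubmodule.toSubmodule sq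
        = Submodule.span K {z : T | ∃ l : L, z = h l l} := hsq
    rw [hsq'] at ht
    refine Submodule.span_induction (p := fun t _ => ζ t = 0) ?_ ?_ ?_ ?_ ht
    · rintro z ⟨l, rfl⟩
      rw [hζ]
      show mkJ ⟨⁅sl l, sl l⁆, memD _ _⟩ = 0
      have e : (⟨⁅sl l, sl l⁆, memD _ _⟩ : ↥D) = 0 := Subtype.ext (lie_self (sl l))
      rw [e, map_zero]
    · exact ζ.map_zero
    · intro z w _ _ h1 h2
      rw [map_add ζ, h1, h2, add_zero]
    · intro c z _ h1
      rw [map_smul ζ, h1, smul_zero]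
  let ζbar0 : (T ⧸ sq) →ₗ[K] (D ⧸ J) :=
    Submodule.liftQ (LieSubmodule.toSubmodule sq) ζ.toLinearMap
      (fun t ht => LinearMap.mem_ker.2 (hζsq t ht))
  let ζbar : (T ⧸ sq) →ₗ⁅K⁆ (D ⧸ J) :=
    { toLinearMap := ζbar0
      map_lie' := by
        intro q r
        obtain ⟨z, rfl⟩ := Submodule.Quotient.mk_surjective _ q
        obtain ⟨w, rfl⟩ := Submodule.Quotient.mk_surjective _ r
        rw [← LieSubmodule.Quotient.mk_bracket]
        show ζ ⁅z, w⁆ = ⁅ζ z, ζ w⁆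
        exact ζ.map_lie z w }
  -- the two key composition identities on generators
  have hcomp1 : ∀ a b : L, βbar (hq a b) = hb a b := by
    intro a b
    show βlin ⁅sl a, sl b⁆ = hb a b
    rw [β_br, hs, hs]
  have hcomp2 : ∀ a b : L, ζbar (hb a b) = hq a b := by
    intro a b
    exact hζ a b
  -- right inverse : `ζbar ∘ βbar = id`
  have rinv : ∀ q : D ⧸ J, ζbar (βbar q) = q := by
    intro q
    refine Submodule.span_induction (p := fun q _ => ζbar (βbar q) = q) ?_ ?_ ?_ ?_ (hspanQ q)
    · rintro z ⟨⟨a, b⟩, rfl⟩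
      show ζbar (βbar (hq a b)) = hq a b
      rw [hcomp1, hcomp2]
    · show ζbar (βbar 0) = 0
      rw [map_zero βbar, map_zero ζbar]
    · intro z w _ _ h1 h2
      show ζbar (βbar (z + w)) = z + w
      rw [map_add βbar, map_add ζbar, h1, h2]
    · intro c z _ h1
      show ζbar (βbar (c • z)) = c • z
      rw [map_smul βbar, map_smul ζbar, h1]
  -- left inverse : `βbar ∘ ζbar = id`, via uniqueness of the universal pairing
  let e2 : ULift.{max u v} (T ⧸ sq) ≃ₗ[K] (T ⧸ sq) := ULift.moduleEquiv
  letI : LieRing (ULift.{max u v} (T ⧸ sq)) := tLieRing e2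
  letI : LieAlgebra K (ULift.{max u v} (T ⧸ sq)) := tLieAlgebra e2
  let eU := tLieEquiv e2
  obtain ⟨ξ, hξmap, hξuniq⟩ := hh.universal (ULift.{max u v} (T ⧸ sq))
    (fun a b => eU.symm.toLieHom (hb a b)) (hbP.comp eU.symm.toLieHom)
  have h1 : eU.symm.toLieHom.comp mkT = ξ :=
    hξuniq (eU.symm.toLieHom.comp mkT) (fun a b => rfl)
  have h2 : eU.symm.toLieHom.comp ((βbar.comp ζbar).comp mkT) = ξ := by
    refine hξuniq _ (fun a b => ?_)
    show eU.symm.toLieHom (βbar (ζbar (hb a b))) = eU.symm.toLieHom (hb a b)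
    rw [hcomp2, hcomp1]
  have heq : eU.symm.toLieHom.comp mkT = eU.symm.toLieHom.comp ((βbar.comp ζbar).comp mkT) :=
    h1.trans h2.symm
  have linv : ∀ m : T ⧸ sq, βbar (ζbar m) = m := by
    intro m
    obtain ⟨t, rfl⟩ := Submodule.Quotient.mk_surjective _ m
    have e3 := LieHom.congr_fun heq t
    have e4 : mkT t = βbar (ζbar (mkT t)) := eU.symm.injective e3
    exact e4.symm
  exact ⟨{ toLieHom := ζbar, invFun := βbar, left_inv := linv, right_inv := rinv }⟩
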